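/- Let λ ∈ ℤ^{r+1} be dominant (λ_1 ≥ … ≥ λ_{r+1}) and effective (λ_{r+1} ≥ 0), let ρ = (r, r−1, …, 1, 0), ρ_{r−1} = (r−1, …, 1, 0), let 0 ≤ k ≤ r−1, write y = (x_1,…,x_r), and let w_0 be the longest element of S_{r+1} and w_0^{(r−1)} the longest element of the subgroup S_r of permutations fixing r+1. Then x^{−w_0(ρ)} · Σ_T G^{(n)}(T)·x^{wt(T)} = Σ_μ G^{(n)}(T*_μ)·x_{r+1}^{d(λ+ρ)−d(μ)−r} · ( y^{−w_0^{(r−1)}(ρ_{r−1})} · Σ_{T′} G^{(n)}(T′)·y^{wt(T′)} ), where: on the left T runs over rank-r Gelfand–Tsetlin patterns with top row λ+ρ whose Γ-array satisfies Γ_{1,j} = 0 for all j > k+1; on the right μ runs over all μ ∈ ℤ^r interleaving with λ+ρ (i.e. (λ+ρ)_j ≥ μ_j ≥ (λ+ρ)_{j+1} for all j) such that μ_j = λ_{j+1}+r−j for all j > k+1; T*_μ is the rank-r pattern with top row λ+ρ and entries a_{i,j} = μ_j for all 1 ≤ i ≤ j ≤ r; T′ runs over rank-(r−1) patterns with top row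 μ; and d(·) is the sum of the coordinates. -/

import Mathlib

open scoped BigOperators Classical
open Fin.NatCast

noncomputable section

namespace MetaPaper

variable (F : Type) [Field F]

/-- The field of rational functions in `x_1, …, x_{r+1}` over `F`. -/
abbrev K (r : ℕ) : Type := FractionRing (MvPolynomial (Fin (r+1)) F)

variable (r : ℕ)

/-- The variable `x_i` as an element of `K`. -/
def XX (i : Fin (r+1)) : K F r :=
  algebraMap (MvPolynomial (Fin (r+1)) F) (K F r) (MvPolynomial.X i)

/-- A constant from `F` as an element of `K`. -/
def CC (c : F) : K F r :=
  algebraMap (MvPolynomial (Fin (r+1)) F) (K F r) (MvPolynomial.C c)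

/-- The monomial `x^λ = x_1^{λ_1} ⋯ x_{r+1}^{λ_{r+1}}`. -/
def mon (lam : Fin (r+1) → ℤ) : K F r := ∏ i, XX F r i ^ lam i

/-- The simple reflection `σ_{i+1}` (0-indexed: swapping coordinates `i` and `i+1`). -/
def sref (i : ℕ) : Equiv.Perm (Fin (r+1)) :=
  Equiv.swap ((i : Fin (r+1))) (((i+1 : ℕ) : Fin (r+1)))

/-- The product of the simple reflections indexed by a word. -/
def wordProd (l : List ℕ) : Equiv.Perm (Fin (r+1)) := (l.map (sref r)).prod

/-- The (Coxeter) length of a permutation: the least length of a word in the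
simple reflections representing it. -/
def plen (u : Equiv.Perm (Fin (r+1))) : ℕ :=
  sInf {m | ∃ l : List ℕ, (∀ i ∈ l, i < r) ∧ l.length = m ∧ wordProd r l = u}

/-- The strong Bruhat order: `u ≤ w` iff `u` is the product of a subword of a
reduced word for `w`. -/
def BruhatLE (u w : Equiv.Perm (Fin (r+1))) : Prop :=
  ∃ l : List ℕ, (∀ i ∈ l, i < r) ∧ wordProd r l = w ∧ l.length = plen r w ∧
    ∃ l' : List ℕ, l'.Sublist l ∧ wordProd r l' = u

/-- The favourite reduced word `σ_1, σ_2 σ_1, σ_3 σ_2 σ_1, …` (0-indexed) for the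
longest element of `S_{m+1}`. -/
def favWord (m : ℕ) : List ℕ := (List.range m).flatMap (fun b => (List.range (b+1)).reverse)

/-- `x^{α_i} = x_i / x_{i+1}` (0-indexed `i`). -/
def xalpha (i : ℕ) : K F r := XX F r (i : Fin (r+1)) / XX F r ((i+1 : ℕ) : Fin (r+1))

/-- The sublattice `Λ₀` of exponent vectors whose coordinates are all congruent mod `n`. -/
def Lam0 (n : ℕ) : Set (Fin (r+1) → ℤ) := {lam | ∀ i j, (n : ℤ) ∣ lam i - lam j}

/-- The subfield `K₀` of `K` generated by the monomials `x^λ` with `λ ∈ Λ₀`. -/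
def K0 (n : ℕ) : Subfield (K F r) :=
  Subfield.closure {x | ∃ lam ∈ Lam0 r n, x = mon F r lam}

variable (n : ℕ) (v : F) (g : ℤ → F)

/-- Data of the metaplectic (Chinta–Gunnells) action of `W = S_{r+1}` on `K`,
together with the ordinary permutation action, and their defining properties. -/
structure Setup : Type where
  /-- the Chinta–Gunnells action -/
  act : Equiv.Perm (Fin (r+1)) → K F r → K F r
  /-- the ordinary permutation action on `K` -/
  perm : Equiv.Perm (Fin (r+1)) → K F r ≃+* K F r
  perm_X : ∀ w i, perm w (XX F r i) = XX F r (w i)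
  perm_const : ∀ w c, perm w (CC F r c) = CC F r c
  perm_one : ∀ f, perm 1 f = f
  perm_mul : ∀ u w f, perm (u * w) f = perm u (perm w f)
  act_one : ∀ f, act 1 f = f
  act_mul : ∀ u w f, act (u * w) f = act u (act w f)
  act_add : ∀ w f h, act w (f + h) = act w f + act w h
  act_const_mul : ∀ w c f, act w (CC F r c * f) = CC F r c * act w f
  act_simple : ∀ i : ℕ, i < r → ∀ lam : Fin (r+1) → ℤ,
    act (sref r i) (mon F r lam) =
      mon F r (fun j => lam (sref r i j)) / (1 - CC F r v * xalpha F r i ^ (n : ℕ)) *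
        (xalpha F r i ^ (-((lam (((i+1 : ℕ) : Fin (r+1))) - lam ((i : Fin (r+1)))) % (n : ℤ)))
            * (1 - CC F r v)
          - CC F r v * CC F r (g (1 + lam (((i+1 : ℕ) : Fin (r+1))) - lam ((i : Fin (r+1)))))
            * xalpha F r i ^ (1 - (n : ℤ)) * (1 - xalpha F r i ^ (n : ℕ)))
  act_K0 : ∀ i : ℕ, i < r → ∀ h f : K F r, h ∈ K0 F r n →
    act (sref r i) (h * f) = perm (sref r i) h * act (sref r i) f

variable {F r n v g}

/-- The metaplectic Demazure operator `D_i`. -/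
def Dem (S : Setup F r n v g) (i : ℕ) (f : K F r) : K F r :=
  (f - xalpha F r i ^ (n : ℕ) * S.act (sref r i) f) / (1 - xalpha F r i ^ (n : ℕ))

/-- The metaplectic Demazure–Lusztig operator `T_i`. -/
def DL (S : Setup F r n v g) (i : ℕ) (f : K F r) : K F r :=
  (1 - CC F r v * xalpha F r i ^ (n : ℕ)) * Dem S i f - f

/-- `D_{i_1} ⋯ D_{i_l}` for a word `[i_1, …, i_l]`. -/
def DWord (S : Setup F r n v g) : List ℕ → K F r → K F r
  | [] => fun f => f
  | i :: l => fun f => Dem S i (DWord S l f)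

/-- `T_{i_1} ⋯ T_{i_l}` for a word `[i_1, …, i_l]`. -/
def TWord (S : Setup F r n v g) : List ℕ → K F r → K F r
  | [] => fun f => f
  | i :: l => fun f => DL S i (TWord S l f)

/-- `D_u` for `u ∈ W`, via a chosen reduced word for `u` (by the braid relations
this does not depend on the choice). -/
def Dperm (S : Setup F r n v g) (u : Equiv.Perm (Fin (r+1))) : K F r → K F r :=
  if h : ∃ l : List ℕ, (∀ i ∈ l, i < r) ∧ l.length = plen r u ∧ wordProd r l = u
  then DWord S h.choose else id

/-- `T_u` for `u ∈ W`, via a chosen reduced word for `u`. -/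
def Tperm (S : Setup F r n v g) (u : Equiv.Perm (Fin (r+1))) : K F r → K F r :=
  if h : ∃ l : List ℕ, (∀ i ∈ l, i < r) ∧ l.length = plen r u ∧ wordProd r l = u
  then TWord S h.choose else id

variable (F r n v g)

/-- `a : ℕ → ℕ → ℤ` encodes a Gelfand–Tsetlin pattern of rank `m`
(entries `a i j`, `0 ≤ i ≤ j ≤ m`, zero outside this triangle). -/
def IsGT (m : ℕ) (a : ℕ → ℕ → ℤ) : Prop :=
  (∀ i j, (j < i ∨ m < j) → a i j = 0) ∧
  (∀ i j, i ≤ j → j ≤ m → 0 ≤ a i j) ∧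
  (∀ i j, 1 ≤ i → i ≤ j → j ≤ m → a i j ≤ a (i-1) (j-1) ∧ a (i-1) j ≤ a i j)

/-- `d_i`, the sum of the `i`-th row of a pattern. -/
def rowSum (m : ℕ) (a : ℕ → ℕ → ℤ) (i : ℕ) : ℤ := ∑ j ∈ Finset.Icc i m, a i j

/-- The `p`-th coordinate (0-indexed) of the weight `wt(T) = (d_m, d_{m-1}-d_m, …, d_0-d_1)`. -/
def wtN (m : ℕ) (a : ℕ → ℕ → ℤ) (p : ℕ) : ℤ := rowSum m a (m - p) - rowSum m a (m - p + 1)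

/-- The Γ-array of a pattern: `Γ_{i,j} = Σ_{k=j}^{m} (a_{i,k} - a_{i-1,k})`. -/
def GammaArr (m : ℕ) (a : ℕ → ℕ → ℤ) (i j : ℕ) : ℤ :=
  ∑ k ∈ Finset.Icc j m, (a i k - a (i-1) k)

/-- `h♭(a) = 1 - v` if `n ∣ a`, else `0`. -/
def hflat (a : ℤ) : F := if (n : ℤ) ∣ a then 1 - v else 0

/-- `g♭(a) = v · g_a`. -/
def gflat (a : ℤ) : F := v * g a

/-- The factor `g_{ij}(T)` of the degree-`n` Gelfand–Tsetlin coefficient. -/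
def gcoefP (m : ℕ) (a : ℕ → ℕ → ℤ) (i j : ℕ) : F :=
  if GammaArr m a i (j+1) = GammaArr m a i j ∧
      GammaArr m a i j < GammaArr m a i (j+1) + a (i-1) (j-1) - a (i-1) j then 1
  else if GammaArr m a i (j+1) < GammaArr m a i j ∧
      GammaArr m a i j < GammaArr m a i (j+1) + a (i-1) (j-1) - a (i-1) j then
    hflat F n v (GammaArr m a i j)
  else if GammaArr m a i (j+1) < GammaArr m a i j ∧
      GammaArr m a i j = GammaArr m a i (j+1) + a (i-1) (j-1) - a (i-1) j then
    gflat F v g (GammaArr m a i j)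
  else 0

/-- The degree-`n` Gelfand–Tsetlin coefficient `G^{(n)}(T)`. -/
def Gcoef (m : ℕ) (a : ℕ → ℕ → ℤ) : F :=
  ∏ i ∈ Finset.Icc 1 m, ∏ j ∈ Finset.Icc i m, gcoefP F n v g m a i j

/-- `Γ = (Γ_1, …, Γ_m)` (1-indexed, zero outside) is `ν`-admissible. -/
def IsAdm (m : ℕ) (ν Γ : ℕ → ℤ) : Prop :=
  (∀ j, j = 0 ∨ m < j → Γ j = 0) ∧
  ∀ j, 1 ≤ j → j ≤ m → Γ (j+1) ≤ Γ j ∧ Γ j ≤ Γ (j+1) + ν j - ν (j+1) + 1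

/-- `Γ` is `(ν,k)`-admissible. -/
def IsAdmK (m k : ℕ) (ν Γ : ℕ → ℤ) : Prop := IsAdm m ν Γ ∧ ∀ j, k + 1 < j → Γ j = 0

/-- The `p`-th coordinate (0-indexed) of
`wt^{(ν)}(Γ) = (ν_{m+1}+Γ_m, ν_m+Γ_{m-1}-Γ_m, …, ν_1-Γ_1)`. -/
def wtGam (m : ℕ) (ν Γ : ℕ → ℤ) (p : ℕ) : ℤ := ν (m+1-p) + Γ (m-p) - Γ (m-p+1)

/-- The factor `c_j` of `G_1^{(ν)}(Γ)`. -/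
def gamCoef (ν Γ : ℕ → ℤ) (j : ℕ) : F :=
  if Γ (j+1) = Γ j ∧ Γ j < Γ (j+1) + ν j - ν (j+1) + 1 then 1
  else if Γ (j+1) < Γ j ∧ Γ j < Γ (j+1) + ν j - ν (j+1) + 1 then hflat F n v (Γ j)
  else if Γ (j+1) < Γ j ∧ Γ j = Γ (j+1) + ν j - ν (j+1) + 1 then gflat F v g (Γ j)
  else 0

/-- `G_1^{(ν)}(Γ)`. -/
def G1 (m : ℕ) (ν Γ : ℕ → ℤ) : F := ∏ j ∈ Finset.Icc 1 m, gamCoef F n v g ν Γ j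

/-- The top row `λ + ρ` of a pattern, as a function `ℕ → ℤ` (0-indexed columns). -/
def topRowOf (lam : Fin (r+1) → ℤ) : ℕ → ℤ :=
  fun j => if h : j ≤ r then lam ⟨j, by omega⟩ + ((r : ℤ) - (j : ℤ)) else 0

/-- The weight `λ` reread as a 1-indexed function `ℕ → ℤ` (`ν_j = λ_j`). -/
def nuOf (lam : Fin (r+1) → ℤ) : ℕ → ℤ :=
  fun j => if h : 1 ≤ j ∧ j ≤ r + 1 then lam ⟨j - 1, by omega⟩ else 0

/-- Dominance: `λ_1 ≥ λ_2 ≥ … `. -/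
def Dominant (m : ℕ) (lam : Fin m → ℤ) : Prop := ∀ i j : Fin m, i ≤ j → lam j ≤ lam i

/-- Position of `Γ_{i,j}` in the reading `b_1, b_2, …` of the Γ-array
(rows bottom to top, each row left to right). -/
def bpos (m i j : ℕ) : ℕ := (m - i) * (m - i + 1) / 2 + (j - i + 1)


/-- `δ(A,B) = h♭(A)` if `A < B`, `h♭(A) - 1` if `A = B`, `0` if `A > B`. -/
def deltaHG (A B : ℤ) : F :=
  if A < B then hflat F n v A else if A = B then hflat F n v A - 1 else 0



/-! ### Auxiliary material for Statement 12 -/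

section Aux12

private lemma icc_zero_eq_range (m : ℕ) :
    Finset.Icc 0 m = Finset.range (m+1) := by
  ext x; simp [Finset.mem_Icc, Finset.mem_range]

private lemma icc_eq_insert (a b : ℕ) (h : a ≤ b) :
    Finset.Icc a b = insert a (Finset.Icc (a+1) b) := by
  ext x; simp [Finset.mem_Icc, Finset.mem_insert]; omega

private lemma sum_Icc_shift {M : Type} [AddCommMonoid M] (f : ℕ → M) (a b : ℕ) :
    ∑ i ∈ Finset.Icc (a+1) (b+1), f i = ∑ i ∈ Finset.Icc a b, f (i+1) := by
  refine Finset.sum_nbij' (fun x => x - 1) (fun x => x + 1) ?_ ?_ ?_ ?_ ?_ <;>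
      intro x hx <;> simp only [Finset.mem_Icc] at hx ⊢
  · omega
  · omega
  · omega
  · omega
  · congr 1; omega

private lemma prod_Icc_shift (f : ℕ → ℂ) (a b : ℕ) :
    ∏ i ∈ Finset.Icc (a+1) (b+1), f i = ∏ i ∈ Finset.Icc a b, f (i+1) := by
  refine Finset.prod_nbij' (fun x => x - 1) (fun x => x + 1) ?_ ?_ ?_ ?_ ?_ <;>
      intro x hx <;> simp only [Finset.mem_Icc] at hx ⊢
  · omega
  · omega
  · omega
  · omega
  · congr 1; omega

private lemma gamma_out (m : ℕ) (a : ℕ → ℕ → ℤ) (i j : ℕ) (h : m < j) :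
    GammaArr m a i j = 0 := by
  unfold GammaArr
  rw [Finset.Icc_eq_empty (by omega), Finset.sum_empty]

private lemma gamma_step (m : ℕ) (a : ℕ → ℕ → ℤ) (i j : ℕ) (hj : j ≤ m) :
    GammaArr m a i j = GammaArr m a i (j+1) + (a i j - a (i-1) j) := by
  unfold GammaArr
  rw [icc_eq_insert j m hj, Finset.sum_insert (by simp [Finset.mem_Icc])]
  ring

/-- zero outside the triangle -/
private def ZOut (m : ℕ) (a : ℕ → ℕ → ℤ) : Prop := ∀ i j, j < i ∨ m < j → a i j = 0

/-- the lower pattern: delete the top row and reindex -/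
private def shiftPat (m : ℕ) (a : ℕ → ℕ → ℤ) : ℕ → ℕ → ℤ :=
  fun i j => if i ≤ j ∧ j ≤ m then a (i+1) (j+1) else 0

private lemma shiftPat_eq (m : ℕ) (a : ℕ → ℕ → ℤ) (hz : ZOut (m+1) a)
    (i j : ℕ) (hj : j ≤ m) : shiftPat m a i j = a (i+1) (j+1) := by
  unfold shiftPat
  split_ifs with h
  · rfl
  · exact (hz (i+1) (j+1) (by omega)).symm

private lemma gamma_shift (m : ℕ) (a : ℕ → ℕ → ℤ) (hz : ZOut (m+1) a)
    (i j : ℕ) (hi : 1 ≤ i) :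
    GammaArr m (shiftPat m a) i j = GammaArr (m+1) a (i+1) (j+1) := by
  unfold GammaArr
  rw [sum_Icc_shift]
  refine Finset.sum_congr rfl fun x hx => ?_
  rw [Finset.mem_Icc] at hx
  rw [shiftPat_eq m a hz i x hx.2, shiftPat_eq m a hz (i-1) x hx.2]
  have e1 : i - 1 + 1 = i := by omega
  simp only [Nat.add_sub_cancel, e1]

private lemma gcoefP_shift (n : ℕ) (v : ℂ) (g : ℤ → ℂ) (m : ℕ) (a : ℕ → ℕ → ℤ)
    (hz : ZOut (m+1) a) (i j : ℕ) (hi : 1 ≤ i) (hij : i ≤ j) (hj : j ≤ m) :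
    gcoefP ℂ n v g m (shiftPat m a) i j = gcoefP ℂ n v g (m+1) a (i+1) (j+1) := by
  have h1 := gamma_shift m a hz i j hi
  have h2 := gamma_shift m a hz i (j+1) hi
  have h3 : shiftPat m a (i-1) (j-1) = a i j := by
    rw [shiftPat_eq m a hz (i-1) (j-1) (by omega)]
    congr 1 <;> omega
  have h4 : shiftPat m a (i-1) j = a i (j+1) := by
    rw [shiftPat_eq m a hz (i-1) j hj]
    congr 1
    omega
  unfold gcoefP
  rw [h1, h2, h3, h4]
  simp only [Nat.add_sub_cancel]

private lemma Gcoef_split (n : ℕ) (v : ℂ) (g : ℤ → ℂ) (m : ℕ) (a : ℕ → ℕ → ℤ)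
    (hz : ZOut (m+1) a) :
    Gcoef ℂ n v g (m+1) a
      = (∏ j ∈ Finset.Icc 1 (m+1), gcoefP ℂ n v g (m+1) a 1 j)
        * Gcoef ℂ n v g m (shiftPat m a) := by
  unfold Gcoef
  conv_lhs => rw [icc_eq_insert 1 (m+1) (by omega),
    Finset.prod_insert (by simp [Finset.mem_Icc])]
  congr 1
  rw [prod_Icc_shift _ 1 m]
  refine Finset.prod_congr rfl fun i hi => ?_
  rw [Finset.mem_Icc] at hi
  rw [prod_Icc_shift _ i m]
  refine Finset.prod_congr rfl fun j hj => ?_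
  rw [Finset.mem_Icc] at hj
  exact (gcoefP_shift n v g m a hz i j (by omega) (by omega) (by omega)).symm

private lemma Gcoef_zero_of_repeat (n : ℕ) (v : ℂ) (g : ℤ → ℂ) (m : ℕ)
    (b : ℕ → ℕ → ℤ) (hb : IsGT m b) (j0 : ℕ) (h1 : 1 ≤ j0) (h2 : j0 ≤ m)
    (heq : b 0 (j0-1) = b 0 j0) :
    Gcoef ℂ n v g m b = 0 := by
  unfold Gcoef
  refine Finset.prod_eq_zero (Finset.mem_Icc.mpr ⟨le_refl 1, by omega⟩)
    (Finset.prod_eq_zero (Finset.mem_Icc.mpr ⟨h1, h2⟩) ?_)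
  have hb1 : b 1 j0 = b 0 j0 := by
    have h := hb.2.2 1 j0 le_rfl h1 h2
    simp only [Nat.sub_self] at h
    omega
  have hΓ : GammaArr m b 1 j0 = GammaArr m b 1 (j0+1) := by
    have := gamma_step m b 1 j0 h2
    simp only [Nat.sub_self] at this
    omega
  unfold gcoefP
  simp only [Nat.sub_self]
  rw [hΓ, heq]
  split_ifs with hc1 hc2 hc3
  · exfalso; omega
  · exfalso; omega
  · exfalso; omega
  · rfl

/-- the pattern `T*_μ`, whose rows below the top are all `μ` -/
private def tpat (m : ℕ) (τ μ : ℕ → ℤ) : ℕ → ℕ → ℤ :=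
  fun i j => if i = 0 then τ j else if 1 ≤ i ∧ i ≤ j ∧ j ≤ m+1 then μ j else 0

private lemma tpat_zout (m : ℕ) (τ μ : ℕ → ℤ) (hτ : ∀ j, m+1 < j → τ j = 0) :
    ZOut (m+1) (tpat m τ μ) := by
  intro i j hj
  unfold tpat
  split_ifs with h1 h2
  · exact hτ j (by omega)
  · exfalso; omega
  · rfl

private lemma gamma_tpat (m : ℕ) (τ μ : ℕ → ℤ) (i j : ℕ) (hi : 2 ≤ i) (hij : i ≤ j) :
    GammaArr (m+1) (tpat m τ μ) i j = 0 := by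
  unfold GammaArr
  refine Finset.sum_eq_zero fun x hx => ?_
  rw [Finset.mem_Icc] at hx
  have e1 : tpat m τ μ i x = μ x := by
    unfold tpat
    rw [if_neg (by omega), if_pos ⟨by omega, by omega, by omega⟩]
  have e2 : tpat m τ μ (i-1) x = μ x := by
    unfold tpat
    rw [if_neg (by omega), if_pos ⟨by omega, by omega, by omega⟩]
  rw [e1, e2]
  ring

private lemma gcoefP_tpat_one (n : ℕ) (v : ℂ) (g : ℤ → ℂ) (m : ℕ) (τ μ : ℕ → ℤ)
    (hstrict : ∀ j, 1 ≤ j → j ≤ m → μ (j+1) < μ j)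
    (i j : ℕ) (hi : 2 ≤ i) (hij : i ≤ j) (hj : j ≤ m+1) :
    gcoefP ℂ n v g (m+1) (tpat m τ μ) i j = 1 := by
  have h1 : GammaArr (m+1) (tpat m τ μ) i (j+1) = 0 := by
    rcases Nat.lt_or_ge (m+1) (j+1) with h | h
    · exact gamma_out _ _ _ _ h
    · exact gamma_tpat m τ μ i (j+1) hi (by omega)
  have h2 : GammaArr (m+1) (tpat m τ μ) i j = 0 := gamma_tpat m τ μ i j hi hij
  have e1 : tpat m τ μ (i-1) (j-1) = μ (j-1) := by
    unfold tpat
    rw [if_neg (by omega), if_pos ⟨by omega, by omega, by omega⟩]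
  have e2 : tpat m τ μ (i-1) j = μ j := by
    unfold tpat
    rw [if_neg (by omega), if_pos ⟨by omega, by omega, by omega⟩]
  have hlt : μ j < μ (j-1) := by
    have h := hstrict (j-1) (by omega) (by omega)
    rw [show j - 1 + 1 = j by omega] at h
    exact h
  unfold gcoefP
  rw [h1, h2, e1, e2, if_pos ⟨rfl, by omega⟩]

private lemma Gcoef_shift_tpat_one (n : ℕ) (v : ℂ) (g : ℤ → ℂ) (m : ℕ) (τ μ : ℕ → ℤ)
    (hτ : ∀ j, m+1 < j → τ j = 0)
    (hstrict : ∀ j, 1 ≤ j → j ≤ m → μ (j+1) < μ j) :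
    Gcoef ℂ n v g m (shiftPat m (tpat m τ μ)) = 1 := by
  unfold Gcoef
  refine Finset.prod_eq_one fun i hi => Finset.prod_eq_one fun j hj => ?_
  rw [Finset.mem_Icc] at hi hj
  rw [gcoefP_shift n v g m _ (tpat_zout m τ μ hτ) i j (by omega) (by omega) (by omega)]
  exact gcoefP_tpat_one n v g m τ μ hstrict (i+1) (j+1) (by omega) (by omega) (by omega)

private lemma gcoefP_row1_congr (n : ℕ) (v : ℂ) (g : ℤ → ℂ) (m : ℕ)
    (a a' : ℕ → ℕ → ℤ) (h0 : ∀ j, a' 0 j = a 0 j) (h1 : ∀ j, a' 1 j = a 1 j) (j : ℕ) :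
    gcoefP ℂ n v g (m+1) a' 1 j = gcoefP ℂ n v g (m+1) a 1 j := by
  have hg : ∀ j', GammaArr (m+1) a' 1 j' = GammaArr (m+1) a 1 j' := by
    intro j'
    unfold GammaArr
    refine Finset.sum_congr rfl fun x _ => ?_
    simp only [Nat.sub_self, h0, h1]
  unfold gcoefP
  simp only [Nat.sub_self, hg, h0]

private lemma rowSum_shift (m : ℕ) (a : ℕ → ℕ → ℤ) (hz : ZOut (m+1) a)
    (i : ℕ) (hi : 1 ≤ i) :
    rowSum (m+1) a i = rowSum m (shiftPat m a) (i-1) := by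
  obtain ⟨i', rfl⟩ : ∃ i', i = i' + 1 := ⟨i-1, by omega⟩
  simp only [Nat.add_sub_cancel]
  unfold rowSum
  rw [sum_Icc_shift]
  refine Finset.sum_congr rfl fun j hj => ?_
  rw [Finset.mem_Icc] at hj
  rw [shiftPat_eq m a hz i' j hj.2]

private lemma wtN_shift (m : ℕ) (a : ℕ → ℕ → ℤ) (hz : ZOut (m+1) a)
    (p : ℕ) (hp : p ≤ m) :
    wtN (m+1) a p = wtN m (shiftPat m a) p := by
  unfold wtN
  rw [rowSum_shift m a hz (m+1-p) (by omega), rowSum_shift m a hz (m+1-p+1) (by omega)]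
  have e1 : m+1-p-1 = m-p := by omega
  have e2 : m+1-p+1-1 = m-p+1 := by omega
  rw [e1, e2]

private lemma GT_chain (m : ℕ) (a : ℕ → ℕ → ℤ) (h : IsGT m a) :
    ∀ i j, i ≤ j → j ≤ m → a i j ≤ a 0 (j-i) := by
  intro i
  induction i with
  | zero => intro j _ _; simp
  | succ i ih =>
    intro j hij hj
    have h1 := (h.2.2 (i+1) j (by omega) hij hj).1
    simp only [Nat.add_sub_cancel] at h1
    have h2 := ih (j-1) (by omega) (by omega)
    have e : j - 1 - i = j - (i+1) := by omega
    rw [e] at h2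
    omega

private lemma finite_clamp1 (m : ℕ) (M : ℤ) (P : (ℕ → ℤ) → Prop)
    (hP : ∀ f, P f → (∀ j, m < j → f j = 0) ∧ (∀ j, -M ≤ f j ∧ f j ≤ M)) :
    Finite {f : ℕ → ℤ // P f} := by
  have hfin : (Set.univ.pi (fun _ : Fin (m+1) => Set.Icc (-M) M)).Finite :=
    Set.Finite.pi fun _ => Set.finite_Icc _ _
  haveI := hfin.to_subtype
  refine Finite.of_injective (fun f => (⟨fun j : Fin (m+1) => f.1 j.val, by
      intro j _
      exact Set.mem_Icc.mpr ⟨(hP f.1 f.2).2 j.val |>.1, (hP f.1 f.2).2 j.val |>.2⟩⟩ :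
      (Set.univ.pi (fun _ : Fin (m+1) => Set.Icc (-M) M)))) ?_
  intro f g h
  apply Subtype.ext
  funext j
  by_cases hj : j ≤ m
  · have := congrFun (congrArg Subtype.val h) ⟨j, by omega⟩
    exact this
  · rw [(hP f.1 f.2).1 j (by omega), (hP g.1 g.2).1 j (by omega)]

private lemma finite_clamp2 (m : ℕ) (M : ℤ) (P : (ℕ → ℕ → ℤ) → Prop)
    (hP : ∀ a, P a → (∀ i j, m < i ∨ m < j → a i j = 0) ∧ (∀ i j, -M ≤ a i j ∧ a i j ≤ M)) :
    Finite {a : ℕ → ℕ → ℤ // P a} := by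
  have hfin : (Set.univ.pi (fun _ : Fin (m+1) =>
      Set.univ.pi (fun _ : Fin (m+1) => Set.Icc (-M) M))).Finite :=
    Set.Finite.pi fun _ => Set.Finite.pi fun _ => Set.finite_Icc _ _
  haveI := hfin.to_subtype
  refine Finite.of_injective (fun a => (⟨fun i : Fin (m+1) => fun j : Fin (m+1) => a.1 i.val j.val, by
      intro i _
      intro j _
      exact Set.mem_Icc.mpr ⟨(hP a.1 a.2).2 i.val j.val |>.1, (hP a.1 a.2).2 i.val j.val |>.2⟩⟩ :
      (Set.univ.pi (fun _ : Fin (m+1) =>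
        Set.univ.pi (fun _ : Fin (m+1) => Set.Icc (-M) M))))) ?_
  intro a b h
  apply Subtype.ext
  funext i j
  by_cases hij : i ≤ m ∧ j ≤ m
  · have := congrFun (congrFun (congrArg Subtype.val h) ⟨i, by omega⟩) ⟨j, by omega⟩
    exact this
  · rw [(hP a.1 a.2).1 i j (by omega), (hP b.1 b.2).1 i j (by omega)]

private lemma finite_GTpat (m : ℕ) (τ : ℕ → ℤ) (P : (ℕ → ℕ → ℤ) → Prop)
    (hP : ∀ a, P a → IsGT m a ∧ ∀ j, j ≤ m → a 0 j = τ j) :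
    Finite {a : ℕ → ℕ → ℤ // P a} := by
  set M : ℤ := ∑ l ∈ Finset.range (m+1), |τ l| with hM
  have hM0 : 0 ≤ M := Finset.sum_nonneg fun l _ => abs_nonneg _
  have hMb : ∀ l, l ≤ m → τ l ≤ M := by
    intro l hl
    calc τ l ≤ |τ l| := le_abs_self _
      _ ≤ M := Finset.single_le_sum (f := fun l => |τ l|)
          (fun _ _ => abs_nonneg _) (Finset.mem_range.mpr (by omega))
  refine finite_clamp2 m M P fun a ha => ⟨?_, ?_⟩
  · intro i j hij
    rcases Nat.lt_or_ge j i with h | h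
    · exact (hP a ha).1.1 i j (Or.inl h)
    · exact (hP a ha).1.1 i j (Or.inr (by omega))
  · intro i j
    by_cases hij : i ≤ j ∧ j ≤ m
    · have h1 := (hP a ha).1.2.1 i j hij.1 hij.2
      have h2 := GT_chain m a (hP a ha).1 i j hij.1 hij.2
      have h3 := (hP a ha).2 (j-i) (by omega)
      have h4 := hMb (j-i) (by omega)
      constructor <;> omega
    · have : a i j = 0 := (hP a ha).1.1 i j (by omega)
      constructor <;> omega

private lemma finite_mu (m : ℕ) (τ : ℕ → ℤ) (P : (ℕ → ℤ) → Prop)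
    (hP : ∀ f, P f → (∀ j, (j = 0 ∨ m < j) → f j = 0) ∧
      (∀ j, 1 ≤ j → j ≤ m → τ j ≤ f j ∧ f j ≤ τ (j-1))) :
    Finite {f : ℕ → ℤ // P f} := by
  set M : ℤ := ∑ l ∈ Finset.range (m+1), |τ l| with hM
  have hM0 : 0 ≤ M := Finset.sum_nonneg fun l _ => abs_nonneg _
  have hMb : ∀ l, l ≤ m → |τ l| ≤ M := by
    intro l hl
    exact Finset.single_le_sum (f := fun l => |τ l|)
      (fun _ _ => abs_nonneg _) (Finset.mem_range.mpr (by omega))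
  refine finite_clamp1 m M P fun f hf => ⟨fun j hj => (hP f hf).1 j (Or.inr hj), ?_⟩
  intro j
  by_cases hj : 1 ≤ j ∧ j ≤ m
  · have h1 := (hP f hf).2 j hj.1 hj.2
    have h2 := hMb j (by omega)
    have h3 := hMb (j-1) (by omega)
    have h4 : -|τ j| ≤ τ j := neg_abs_le _
    have h5 : τ (j-1) ≤ |τ (j-1)| := le_abs_self _
    constructor <;> omega
  · have : f j = 0 := (hP f hf).1 j (by omega)
    constructor <;> omega

private lemma XX_ne_zero (r : ℕ) (i : Fin (r+1)) : XX ℂ r i ≠ 0 := by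
  have hinj : Function.Injective (algebraMap (MvPolynomial (Fin (r+1)) ℂ) (K ℂ r)) :=
    IsFractionRing.injective _ _
  unfold XX
  rw [map_ne_zero_iff _ hinj]
  exact MvPolynomial.X_ne_zero i

private lemma mon_mul (r : ℕ) (f g : Fin (r+1) → ℤ) :
    mon ℂ r f * mon ℂ r g = mon ℂ r (fun i => f i + g i) := by
  unfold mon
  rw [← Finset.prod_mul_distrib]
  exact Finset.prod_congr rfl fun i _ => (zpow_add₀ (XX_ne_zero r i) _ _).symm

private lemma mon_single (r : ℕ) (E : ℤ) :
    mon ℂ r (fun p => if p = Fin.last r then E else 0) = XX ℂ r (Fin.last r) ^ E := by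
  unfold mon
  rw [Finset.prod_eq_single (Fin.last r)]
  · simp
  · intro b _ hb
    simp [hb]
  · intro h
    exact absurd (Finset.mem_univ _) h

private lemma CC_mul (r : ℕ) (x y : ℂ) : CC ℂ r (x*y) = CC ℂ r x * CC ℂ r y := by
  unfold CC
  rw [map_mul, map_mul]

private lemma mon_key (m : ℕ) (S1 S2 : ℤ) (w w' : ℕ → ℤ)
    (hw : ∀ p : ℕ, p < m+1 → w p = w' p)
    (htot : w (m+1) = S1 - S2) :
    mon ℂ (m+1) (fun j => -(((m+1 : ℕ) : ℤ) - (j.rev.val : ℤ)))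
        * mon ℂ (m+1) (fun p => w p.val)
      = XX ℂ (m+1) (Fin.last (m+1)) ^ (S1 - S2 - ((m+1 : ℕ) : ℤ))
        * (mon ℂ (m+1) (fun j => if j.val < m+1 then -(j.val : ℤ) else 0)
          * mon ℂ (m+1) (fun j => if j.val < m+1 then w' j.val else 0)) := by
  rw [mon_mul, ← mon_single, mon_mul, mon_mul]
  congr 1
  funext p
  rcases eq_or_ne p (Fin.last (m+1)) with hp | hp
  · subst hp
    simp [Fin.val_rev]
    omega
  · have hplt : p.val < m+1 := Fin.val_lt_last hp
    rw [hw p.val hplt]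
    have hlt2 := p.isLt
    simp [Fin.val_rev, hp, hplt]
    omega

private lemma fwd_mu_props (m k : ℕ) (τ : ℕ → ℤ) (a : ℕ → ℕ → ℤ) (h : IsGT (m+1) a)
    (htop : ∀ j, a 0 j = τ j) (hG : ∀ j, k + 1 < j → GammaArr (m+1) a 1 j = 0) :
    (∀ j, (j = 0 ∨ m+1 < j) → a 1 j = 0) ∧
    (∀ j, 1 ≤ j → j ≤ m+1 → τ j ≤ a 1 j ∧ a 1 j ≤ τ (j-1)) ∧
    (∀ j, k + 1 < j → j ≤ m+1 → a 1 j = τ j) := by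
  refine ⟨fun j hj => h.1 1 j (by omega), fun j h1 h2 => ?_, fun j h1 h2 => ?_⟩
  · have h3 := h.2.2 1 j le_rfl h1 h2
    simp only [Nat.sub_self] at h3
    rw [← htop j, ← htop (j-1)]
    exact ⟨h3.2, h3.1⟩
  · have e1 := gamma_step (m+1) a 1 j h2
    simp only [Nat.sub_self] at e1
    have e2 : GammaArr (m+1) a 1 (j+1) = 0 := by
      rcases Nat.lt_or_ge (m+1) (j+1) with h' | h'
      · exact gamma_out _ _ _ _ h'
      · exact hG (j+1) (by omega)
    have e3 := hG j h1
    have e4 := htop j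
    omega

private lemma shift_IsGT (m : ℕ) (a : ℕ → ℕ → ℤ) (h : IsGT (m+1) a) :
    IsGT m (shiftPat m a) := by
  refine ⟨fun i j hj => ?_, fun i j hij hj => ?_, fun i j h1 h2 h3 => ?_⟩
  · unfold shiftPat
    rw [if_neg (by omega)]
  · unfold shiftPat
    rw [if_pos ⟨hij, hj⟩]
    exact h.2.1 (i+1) (j+1) (by omega) (by omega)
  · have hq := h.2.2 (i+1) (j+1) (by omega) (by omega) (by omega)
    simp only [Nat.add_sub_cancel] at hq
    have v1 : shiftPat m a i j = a (i+1) (j+1) := by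
      unfold shiftPat; rw [if_pos ⟨h2, h3⟩]
    have v2 : shiftPat m a (i-1) (j-1) = a i j := by
      unfold shiftPat
      rw [if_pos ⟨by omega, by omega⟩]
      congr 1 <;> omega
    have v3 : shiftPat m a (i-1) j = a i (j+1) := by
      unfold shiftPat
      rw [if_pos ⟨by omega, h3⟩]
      congr 1
      omega
    rw [v1, v2, v3]
    exact hq

/-- rebuild a rank-`m+1` pattern from the top row and a rank-`m` pattern -/
private def bwdPat (m : ℕ) (τ : ℕ → ℤ) (b : ℕ → ℕ → ℤ) : ℕ → ℕ → ℤ :=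
  fun i j => if i = 0 then τ j else if i ≤ j ∧ j ≤ m+1 then b (i-1) (j-1) else 0

private lemma bwd_props (m k : ℕ) (τ : ℕ → ℤ) (hτz : ∀ j, m+1 < j → τ j = 0)
    (hτnn : ∀ j, j ≤ m+1 → 0 ≤ τ j)
    (μ : ℕ → ℤ) (hμ0 : ∀ j, (j = 0 ∨ m+1 < j) → μ j = 0)
    (hμi : ∀ j, 1 ≤ j → j ≤ m+1 → τ j ≤ μ j ∧ μ j ≤ τ (j-1))
    (hμk : ∀ j, k+1 < j → j ≤ m+1 → μ j = τ j)
    (b : ℕ → ℕ → ℤ) (hb : IsGT m b) (hbt : ∀ j, j ≤ m → b 0 j = μ (j+1)) :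
    IsGT (m+1) (bwdPat m τ b) ∧ (∀ j, bwdPat m τ b 0 j = τ j) ∧
      (∀ j, k+1 < j → GammaArr (m+1) (bwdPat m τ b) 1 j = 0) := by
  have v0 : ∀ j, bwdPat m τ b 0 j = τ j := fun j => by
    unfold bwdPat; rw [if_pos rfl]
  have vi : ∀ i j, 1 ≤ i → i ≤ j → j ≤ m+1 → bwdPat m τ b i j = b (i-1) (j-1) := by
    intro i j h1 h2 h3
    unfold bwdPat
    rw [if_neg (by omega), if_pos ⟨h2, h3⟩]
  have v1 : ∀ j, 1 ≤ j → j ≤ m+1 → bwdPat m τ b 1 j = μ j := by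
    intro j h1 h2
    rw [vi 1 j le_rfl h1 h2, hbt (j-1) (by omega)]
    congr 1
    omega
  refine ⟨⟨fun i j hj => ?_, fun i j hij hj => ?_, fun i j h1 h2 h3 => ?_⟩, v0, ?_⟩
  · unfold bwdPat
    split_ifs with ha hbc
    · exact hτz j (by omega)
    · exfalso; omega
    · rfl
  · rcases Nat.eq_zero_or_pos i with hi | hi
    · subst hi
      rw [v0]
      exact hτnn j hj
    · rw [vi i j (by omega) hij hj]
      exact hb.2.1 (i-1) (j-1) (by omega) (by omega)
  · rcases Nat.lt_or_ge i 2 with hi | hi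
    · have hi1 : i = 1 := by omega
      subst hi1
      rw [v1 j h2 h3]
      simp only [Nat.sub_self]
      rw [v0, v0]
      have := hμi j h2 h3
      exact ⟨this.2, this.1⟩
    · rw [vi i j (by omega) h2 h3, vi (i-1) (j-1) (by omega) (by omega) (by omega),
        vi (i-1) j (by omega) (by omega) h3]
      exact hb.2.2 (i-1) (j-1) (by omega) (by omega) (by omega)
  · intro j hj
    rcases Nat.lt_or_ge (m+1) j with h' | h'
    · exact gamma_out _ _ _ _ h'
    · unfold GammaArr
      refine Finset.sum_eq_zero fun x hx => ?_
      rw [Finset.mem_Icc] at hx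
      simp only [Nat.sub_self]
      rw [v1 x (by omega) hx.2, v0 x, hμk x (by omega) hx.2]
      ring

private lemma bwd_fwd (m : ℕ) (τ : ℕ → ℤ) (a : ℕ → ℕ → ℤ) (h : IsGT (m+1) a)
    (htop : ∀ j, a 0 j = τ j) :
    bwdPat m τ (shiftPat m a) = a := by
  funext i j
  unfold bwdPat shiftPat
  split_ifs with h1 h2 h3
  · subst h1
    exact (htop j).symm
  · have e1 : i - 1 + 1 = i := by omega
    have e2 : j - 1 + 1 = j := by omega
    rw [e1, e2]
  · exact absurd ⟨by omega, by omega⟩ h3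
  · exact (h.1 i j (by omega)).symm

end Aux12

/-- branching of the Demazure-crystal sum:
`x^{-w₀ρ} Σ_T G^{(n)}(T) x^{wt T}` (patterns with `Γ_{1,j} = 0` for `j > k+1`) equals
`Σ_μ G^{(n)}(T*_μ) x_{r+1}^{d(λ+ρ)-d(μ)-r} (y^{-w₀^{(r-1)}ρ_{r-1}} Σ_{T'} G^{(n)}(T') y^{wt T'})`. -/
theorem statement12 (r n : ℕ) (hr : 1 ≤ r) (hn : 1 ≤ n) (v : ℂ) (g : ℤ → ℂ)
    (hv : v ≠ 0)
    (hgper : ∀ i j : ℤ, i % (n : ℤ) = j % (n : ℤ) → g i = g j)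
    (hg0 : g 0 = -1)
    (hginv : ∀ i : ℤ, 1 ≤ i → i ≤ (n : ℤ) - 1 → g i * g ((n : ℤ) - i) = v⁻¹)
    (lam : Fin (r+1) → ℤ) (hdom : Dominant (r+1) lam) (heff : 0 ≤ lam (Fin.last r))
    (k : ℕ) (hk : k ≤ r - 1) :
    mon ℂ r (fun j => -((r : ℤ) - (j.rev.val : ℤ))) *
      (∑ᶠ T : {a : ℕ → ℕ → ℤ // IsGT r a ∧ (∀ j, a 0 j = topRowOf r lam j) ∧
            ∀ j, k + 1 < j → GammaArr r a 1 j = 0},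
        CC ℂ r (Gcoef ℂ n v g r T.1) * mon ℂ r (fun p => wtN r T.1 p.val))
    = ∑ᶠ μ : {μ : ℕ → ℤ // (∀ j, (j = 0 ∨ r < j) → μ j = 0) ∧
          (∀ j, 1 ≤ j → j ≤ r → topRowOf r lam j ≤ μ j ∧ μ j ≤ topRowOf r lam (j-1)) ∧
          (∀ j, k + 1 < j → j ≤ r → μ j = topRowOf r lam j)},
        CC ℂ r (Gcoef ℂ n v g r (fun i j =>
            if i = 0 then topRowOf r lam j
            else if 1 ≤ i ∧ i ≤ j ∧ j ≤ r then μ.1 j else 0)) *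
          XX ℂ r (Fin.last r) ^
            ((∑ j ∈ Finset.range (r+1), topRowOf r lam j)
              - (∑ j ∈ Finset.Icc 1 r, μ.1 j) - (r : ℤ)) *
          (mon ℂ r (fun j => if j.val < r then -(j.val : ℤ) else 0) *
            ∑ᶠ T' : {a : ℕ → ℕ → ℤ // IsGT (r-1) a ∧ ∀ j, j ≤ r - 1 → a 0 j = μ.1 (j+1)},
              CC ℂ r (Gcoef ℂ n v g (r-1) T'.1) *
                mon ℂ r (fun j => if j.val < r then wtN (r-1) T'.1 j.val else 0)) := by
  obtain ⟨m, rfl⟩ : ∃ m, r = m + 1 := ⟨r - 1, by omega⟩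
  simp only [Nat.add_sub_cancel]
  set τ : ℕ → ℤ := topRowOf (m+1) lam with hτdef
  have hτz : ∀ j, m+1 < j → τ j = 0 := by
    intro j hj
    rw [hτdef]
    unfold topRowOf
    rw [dif_neg (by omega)]
  have hlamnn : ∀ i : Fin (m+1+1), 0 ≤ lam i := fun i =>
    le_trans heff (hdom i (Fin.last (m+1)) (Fin.le_last i))
  have hτnn : ∀ j, j ≤ m+1 → 0 ≤ τ j := by
    intro j hj
    rw [hτdef]
    unfold topRowOf
    rw [dif_pos hj]
    have h2 : (0:ℤ) ≤ ((m+1 : ℕ) : ℤ) - (j : ℤ) := by omega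
    exact add_nonneg (hlamnn _) h2
  haveI : Finite {a : ℕ → ℕ → ℤ // IsGT (m+1) a ∧ (∀ j, a 0 j = τ j) ∧
      ∀ j, k + 1 < j → GammaArr (m+1) a 1 j = 0} :=
    finite_GTpat (m+1) τ _ (fun a ha => ⟨ha.1, fun j _ => ha.2.1 j⟩)
  haveI : Fintype {a : ℕ → ℕ → ℤ // IsGT (m+1) a ∧ (∀ j, a 0 j = τ j) ∧
      ∀ j, k + 1 < j → GammaArr (m+1) a 1 j = 0} := Fintype.ofFinite _
  haveI : Finite {μ : ℕ → ℤ // (∀ j, (j = 0 ∨ m+1 < j) → μ j = 0) ∧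
      (∀ j, 1 ≤ j → j ≤ m+1 → τ j ≤ μ j ∧ μ j ≤ τ (j-1)) ∧
      (∀ j, k + 1 < j → j ≤ m+1 → μ j = τ j)} :=
    finite_mu (m+1) τ _ (fun f hf => ⟨hf.1, hf.2.1⟩)
  haveI : Fintype {μ : ℕ → ℤ // (∀ j, (j = 0 ∨ m+1 < j) → μ j = 0) ∧
      (∀ j, 1 ≤ j → j ≤ m+1 → τ j ≤ μ j ∧ μ j ≤ τ (j-1)) ∧
      (∀ j, k + 1 < j → j ≤ m+1 → μ j = τ j)} := Fintype.ofFinite _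
  haveI : ∀ μ : {μ : ℕ → ℤ // (∀ j, (j = 0 ∨ m+1 < j) → μ j = 0) ∧
      (∀ j, 1 ≤ j → j ≤ m+1 → τ j ≤ μ j ∧ μ j ≤ τ (j-1)) ∧
      (∀ j, k + 1 < j → j ≤ m+1 → μ j = τ j)},
      Finite {a : ℕ → ℕ → ℤ // IsGT (m+1-1) a ∧ ∀ j, j ≤ m+1-1 → a 0 j = μ.1 (j+1)} :=
    fun μ => finite_GTpat (m+1-1) (fun j => μ.1 (j+1)) _ (fun a ha => ⟨ha.1, ha.2⟩)
  haveI : ∀ μ : {μ : ℕ → ℤ // (∀ j, (j = 0 ∨ m+1 < j) → μ j = 0) ∧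
      (∀ j, 1 ≤ j → j ≤ m+1 → τ j ≤ μ j ∧ μ j ≤ τ (j-1)) ∧
      (∀ j, k + 1 < j → j ≤ m+1 → μ j = τ j)},
      Fintype {a : ℕ → ℕ → ℤ // IsGT (m+1-1) a ∧ ∀ j, j ≤ m+1-1 → a 0 j = μ.1 (j+1)} :=
    fun μ => Fintype.ofFinite _
  simp only [finsum_eq_sum_of_fintype, Finset.mul_sum]
  rw [Finset.sum_sigma', Finset.univ_sigma_univ]
  refine Fintype.sum_equiv
    ⟨fun T => ⟨⟨T.1 1, fwd_mu_props m k τ T.1 T.2.1 T.2.2.1 T.2.2.2⟩,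
      ⟨shiftPat m T.1, shift_IsGT m T.1 T.2.1, fun j hj => by
        simpa using shiftPat_eq m T.1 T.2.1.1 0 j hj⟩⟩,
     fun x => ⟨bwdPat m τ x.2.1,
        (bwd_props m k τ hτz hτnn x.1.1 x.1.2.1 x.1.2.2.1 x.1.2.2.2 x.2.1 x.2.2.1 x.2.2.2).1,
        (bwd_props m k τ hτz hτnn x.1.1 x.1.2.1 x.1.2.2.1 x.1.2.2.2 x.2.1 x.2.2.1 x.2.2.2).2.1,
        (bwd_props m k τ hτz hτnn x.1.1 x.1.2.1 x.1.2.2.1 x.1.2.2.2 x.2.1 x.2.2.1 x.2.2.2).2.2⟩,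
     ?_, ?_⟩ _ _ ?_
  · intro T
    exact Subtype.ext (bwd_fwd m τ T.1 T.2.1 T.2.2.1)
  · rintro ⟨⟨μ, hμ⟩, ⟨b, hb⟩⟩
    dsimp only at hb
    have h1 : (bwdPat m τ b) 1 = μ := by
      funext j
      by_cases hj : 1 ≤ j ∧ j ≤ m+1
      · unfold bwdPat
        rw [if_neg one_ne_zero, if_pos hj]
        simp only [Nat.sub_self]
        rw [hb.2 (j-1) (by omega)]
        congr 1
        omega
      · unfold bwdPat
        rw [if_neg one_ne_zero, if_neg hj]
        exact (hμ.1 j (by omega)).symm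
    have h2 : shiftPat m (bwdPat m τ b) = b := by
      funext i j
      by_cases hj : i ≤ j ∧ j ≤ m
      · unfold shiftPat bwdPat
        rw [if_pos hj, if_neg (show ¬(i + 1 = 0) by omega), if_pos ⟨by omega, by omega⟩]
        simp only [Nat.add_sub_cancel]
      · unfold shiftPat
        rw [if_neg hj]
        exact (hb.1.1 i j (by omega)).symm
    refine Sigma.ext (Subtype.ext h1) ?_
    rw [Subtype.heq_iff_coe_eq]
    · exact h2
    · intro x
      dsimp only
      rw [h1]
  · intro T
    obtain ⟨a, hGT, htop, hΓ⟩ := T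
    dsimp only [Equiv.coe_fn_mk]
    have hz : ZOut (m+1) a := hGT.1
    have hfactCC : CC ℂ (m+1) (Gcoef ℂ n v g (m+1) a)
        = CC ℂ (m+1) (Gcoef ℂ n v g (m+1)
            (fun i j => if i = 0 then τ j else if 1 ≤ i ∧ i ≤ j ∧ j ≤ m+1 then a 1 j else 0))
          * CC ℂ (m+1) (Gcoef ℂ n v g m (shiftPat m a)) := by
      rw [← CC_mul]
      congr 1
      show Gcoef ℂ n v g (m+1) a
          = Gcoef ℂ n v g (m+1) (tpat m τ (a 1)) * Gcoef ℂ n v g m (shiftPat m a)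
      have hz' : ZOut (m+1) (tpat m τ (a 1)) := tpat_zout m τ (a 1) hτz
      have hs1 := Gcoef_split n v g m a hz
      have hs2 := Gcoef_split n v g m (tpat m τ (a 1)) hz'
      have hrow : (∏ j ∈ Finset.Icc 1 (m+1), gcoefP ℂ n v g (m+1) (tpat m τ (a 1)) 1 j)
          = ∏ j ∈ Finset.Icc 1 (m+1), gcoefP ℂ n v g (m+1) a 1 j := by
        refine Finset.prod_congr rfl fun j _ => gcoefP_row1_congr n v g m a _ ?_ ?_ j
        · intro j'
          unfold tpat
          rw [if_pos rfl]
          exact (htop j').symm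
        · intro j'
          unfold tpat
          rw [if_neg one_ne_zero]
          by_cases hj' : 1 ≤ j' ∧ j' ≤ m+1
          · rw [if_pos ⟨le_rfl, hj'.1, hj'.2⟩]
          · rw [if_neg (fun hc => hj' ⟨hc.2.1, hc.2.2⟩)]
            exact (hz 1 j' (by omega)).symm
      by_cases hstrict : ∀ j', 1 ≤ j' → j' ≤ m → a 1 (j'+1) < a 1 j'
      · rw [hs1, hs2, Gcoef_shift_tpat_one n v g m τ (a 1) hτz hstrict, mul_one, hrow]
      · push_neg at hstrict
        obtain ⟨j0, hj01, hj02, hj03⟩ := hstrict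
        have u1 := (hGT.2.2 1 (j0+1) le_rfl (by omega) (by omega)).1
        have u2 := (hGT.2.2 1 j0 le_rfl hj01 (by omega)).2
        simp only [Nat.sub_self, Nat.add_sub_cancel] at u1 u2
        have hb0 : Gcoef ℂ n v g m (shiftPat m a) = 0 := by
          apply Gcoef_zero_of_repeat n v g m _ (shift_IsGT m a hGT) j0 hj01 hj02
          rw [shiftPat_eq m a hz 0 (j0-1) (by omega), shiftPat_eq m a hz 0 j0 hj02]
          rw [show j0 - 1 + 1 = j0 by omega]
          simp only [Nat.zero_add]
          omega
        rw [hs1, hs2, hb0, mul_zero, mul_zero]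
    have htot : wtN (m+1) a (m+1)
        = (∑ j ∈ Finset.range (m+1+1), τ j) - (∑ j ∈ Finset.Icc 1 (m+1), a 1 j) := by
      unfold wtN
      simp only [Nat.sub_self, zero_add]
      have e2 : rowSum (m+1) a 0 = ∑ j ∈ Finset.range (m+1+1), τ j := by
        unfold rowSum
        rw [icc_zero_eq_range]
        exact Finset.sum_congr rfl fun j _ => htop j
      have e3 : rowSum (m+1) a 1 = ∑ j ∈ Finset.Icc 1 (m+1), a 1 j := rfl
      rw [e2, e3]
    have hM := mon_key m (∑ j ∈ Finset.range (m+1+1), τ j) (∑ j ∈ Finset.Icc 1 (m+1), a 1 j)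
      (wtN (m+1) a) (wtN m (shiftPat m a))
      (fun p hp => wtN_shift m a hz p (by omega)) htot
    rw [hfactCC]
    linear_combination (CC ℂ (m+1) (Gcoef ℂ n v g (m+1)
        (fun i j => if i = 0 then τ j else if 1 ≤ i ∧ i ≤ j ∧ j ≤ m+1 then a 1 j else 0))
      * CC ℂ (m+1) (Gcoef ℂ n v g m (shiftPat m a))) * hM

end MetaPaper
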